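/- Let 0 < α < 1/2 and d > 0. There is a constant M_α > 0 (depending only on α and d) with the following property. Let m > 0 and let k_D, k_C : ℝ × ℝ → ℂ be measurable kernels such that (i) |k_D(x,y)| ≤ m·(1+|x|+|y|)^{-1/2} for all x,y; (ii) |k_C(x,y)| ≤ m·(1+|x|+|y|)^{-3/2} whenever max(|x|,|y|) > d, and |k_C(x,y)| ≤ m·(1+|log|x−y||) whenever |x| ≤ d, |y| ≤ d, x ≠ y; (iii) for every τ ∈ C_{α+1/2}(ℝ) the function x ↦ ∫ k_D(x,y)τ(y)dy is continuous, and for every σ ∈ C_α(ℝ) the function x ↦ ∫ k_C(x,y)σ(y)dy is continuous. If M_α · m < 1, then for every g ∈ C_α(ℝ) and h ∈ C_{α+1/2}(ℝ) there exists a unique pair (σ, τ) ∈ C_α(ℝ) × C_{α+1/2}(ℝ) satisfying, for all x ∈ ℝ, σ(x) + ∫_{-∞}^{∞} k_D(x,y)τ(y)dy = g(x) and ∫_{-∞}^{∞} k_C(x,y)σ(y)dy + τ(x) = h(x). -/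

import Mathlib

open MeasureTheory

open Set


lemma integrable_one_add_abs {β : ℝ} (hβ : 1 < β) :
    Integrable (fun y : ℝ => (1 + |y|) ^ (-β)) := by
  have := integrable_one_add_norm (E := ℝ) (μ := volume) (r := β) (by simpa using hβ)
  simpa [Real.norm_eq_abs] using this

lemma my_integrable_comp_abs {G : ℝ → ℝ} (hG : Integrable G) : Integrable fun y => G |y| := by
  have h1 : IntegrableOn (fun y => G |y|) (Ioi (0:ℝ)) :=
    hG.integrableOn.congr_fun (fun y hy => by rw [abs_of_pos hy]) measurableSet_Ioi
  have h2 : IntegrableOn (fun y => G |y|) (Iic (0:ℝ)) :=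
    hG.comp_neg.integrableOn.congr_fun (fun y hy => by
      simp only [abs_of_nonpos (mem_Iic.mp hy)]) measurableSet_Iic
  have := h2.union h1
  rwa [Iic_union_Ioi, integrableOn_univ] at this
lemma tail_int {β R : ℝ} (hβ : 1 < β) (hR : 0 ≤ R) :
    Integrable (fun t : ℝ => Set.indicator (Ioi R) (fun t : ℝ => (1 + t) ^ (-β)) t) ∧
    ∫ t : ℝ, Set.indicator (Ioi R) (fun t : ℝ => (1 + t) ^ (-β)) t
      = (1 + R) ^ (1 - β) / (β - 1) := by
  have h1R : (0:ℝ) < 1 + R := by linarith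
  set F3 : ℝ → ℝ := Set.indicator (Ioi (1 + R)) (fun u : ℝ => u ^ (-β)) with hF3def
  have hF3 : Integrable F3 :=
    (integrableOn_Ioi_rpow_of_lt (by linarith : -β < -1) h1R).integrable_indicator
      measurableSet_Ioi
  have hkey : ∀ t : ℝ, Set.indicator (Ioi R) (fun t : ℝ => (1 + t) ^ (-β)) t = F3 (1 + t) := by
    intro t
    by_cases ht : R < t
    · rw [Set.indicator_of_mem (mem_Ioi.mpr ht), hF3def,
        Set.indicator_of_mem (mem_Ioi.mpr (by linarith))]
    · rw [Set.indicator_of_notMem (by simpa using ht), hF3def,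
        Set.indicator_of_notMem (by simp only [mem_Ioi, not_lt] at ht ⊢; linarith)]
  constructor
  · simp_rw [hkey]; exact hF3.comp_add_left 1
  · calc ∫ t : ℝ, Set.indicator (Ioi R) (fun t : ℝ => (1 + t) ^ (-β)) t
        = ∫ t : ℝ, F3 (1 + t) := by simp_rw [hkey]
      _ = ∫ u : ℝ, F3 u := by rw [integral_add_left_eq_self]
      _ = ∫ u in Ioi (1 + R), u ^ (-β) := integral_indicator measurableSet_Ioi
      _ = -(1 + R) ^ (-β + 1) / (-β + 1) := integral_Ioi_rpow_of_lt (by linarith) h1R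
      _ = (1 + R) ^ (1 - β) / (β - 1) := by
          rw [show (-β + 1) = -(β - 1) by ring, div_neg, neg_div, neg_neg]
          ring_nf
lemma front_int {γ R : ℝ} (hγ0 : 0 < γ) (hγ1 : γ < 1) (hR : 0 ≤ R) :
    Integrable (fun y : ℝ => (Icc (-R) R).indicator (fun y : ℝ => (1 + |y|) ^ (-γ)) y) ∧
    ∫ y : ℝ, (Icc (-R) R).indicator (fun y : ℝ => (1 + |y|) ^ (-γ)) y
      ≤ 2 * ((1 + R) ^ (1 - γ) / (1 - γ)) := by
  have h1R : (0:ℝ) < 1 + R := by linarith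
  have hcont : Continuous fun y : ℝ => (1 + |y|) ^ (-γ) := by
    refine Continuous.rpow_const (by continuity) (fun y => Or.inl ?_)
    positivity
  have hint : Integrable (fun y : ℝ => (Icc (-R) R).indicator (fun y : ℝ => (1 + |y|) ^ (-γ)) y) :=
    (hcont.integrableOn_Icc).integrable_indicator measurableSet_Icc
  refine ⟨hint, ?_⟩
  set F1 : ℝ → ℝ := (Icc 0 R).indicator (fun t : ℝ => (1 + t) ^ (-γ)) with hF1def
  have hkey : ∀ y : ℝ, (Icc (-R) R).indicator (fun y : ℝ => (1 + |y|) ^ (-γ)) y = F1 |y| := by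
    intro y
    by_cases hy : |y| ≤ R
    · have h1 : y ∈ Icc (-R) R := mem_Icc.mpr (abs_le.mp hy)
      have h2 : |y| ∈ Icc (0:ℝ) R := mem_Icc.mpr ⟨abs_nonneg y, hy⟩
      rw [Set.indicator_of_mem h1, hF1def, Set.indicator_of_mem h2]
    · have h1 : y ∉ Icc (-R) R := by rw [mem_Icc]; exact fun hmem => hy (abs_le.mpr hmem)
      have h2 : |y| ∉ Icc (0:ℝ) R := by rw [mem_Icc]; exact fun hmem => hy hmem.2
      rw [Set.indicator_of_notMem h1, hF1def, Set.indicator_of_notMem h2]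
  calc ∫ y : ℝ, (Icc (-R) R).indicator (fun y : ℝ => (1 + |y|) ^ (-γ)) y
      = ∫ y : ℝ, F1 |y| := by simp_rw [hkey]
    _ = 2 * ∫ t in Ioi (0:ℝ), F1 t := integral_comp_abs
    _ = 2 * ∫ t in Ioc (0:ℝ) R, (1 + t) ^ (-γ) := by
        rw [hF1def, setIntegral_indicator measurableSet_Icc,
          show Ioi (0:ℝ) ∩ Icc 0 R = Ioc 0 R by
            ext t
            simp only [mem_inter_iff, mem_Ioi, mem_Icc, mem_Ioc]
            exact ⟨fun h => ⟨h.1, h.2.2⟩, fun h => ⟨h.1, h.1.le, h.2⟩⟩]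
    _ = 2 * ∫ t in (0:ℝ)..R, (1 + t) ^ (-γ) := by
        rw [intervalIntegral.integral_of_le hR]
    _ = 2 * ∫ u in (1:ℝ)..(1+R), u ^ (-γ) := by
        rw [show (∫ t in (0:ℝ)..R, (1 + t) ^ (-γ))
            = ∫ t in (0:ℝ)..R, (fun u : ℝ => u ^ (-γ)) (1 + t) from rfl,
          intervalIntegral.integral_comp_add_left (fun u : ℝ => u ^ (-γ)) 1, add_zero]
    _ = 2 * (((1+R) ^ (-γ+1) - 1 ^ (-γ+1)) / (-γ+1)) := by
        rw [integral_rpow (Or.inl (by linarith : (-1:ℝ) < -γ))]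
    _ ≤ 2 * ((1 + R) ^ (1 - γ) / (1 - γ)) := by
        rw [Real.one_rpow, show (-γ+1) = 1 - γ by ring]
        have h2 : (0:ℝ) < 1 - γ := by linarith
        gcongr
        linarith

lemma key_int {s γ R : ℝ} (hs : 0 ≤ s) (hγ0 : 0 < γ) (hγ1 : γ < 1) (hsγ : 1 < s + γ)
    (hR : 0 ≤ R) :
    Integrable (fun y : ℝ => (1 + R + |y|) ^ (-s) * (1 + |y|) ^ (-γ)) ∧
    ∫ y : ℝ, (1 + R + |y|) ^ (-s) * (1 + |y|) ^ (-γ) ≤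
      (2 / (1 - γ) + 2 / (s + γ - 1)) * (1 + R) ^ (1 - s - γ) := by
  have h1R : (0:ℝ) < 1 + R := by linarith
  have habs : ∀ y : ℝ, (0:ℝ) < 1 + |y| := fun y => by positivity
  have habs2 : ∀ y : ℝ, (0:ℝ) < 1 + R + |y| := fun y => by positivity
  have hbase : Integrable (fun y : ℝ => (1 + |y|) ^ (-(s+γ))) := integrable_one_add_abs hsγ
  have hfle : ∀ y : ℝ, (1 + R + |y|) ^ (-s) * (1 + |y|) ^ (-γ) ≤ (1 + |y|) ^ (-(s+γ)) := by
    intro y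
    have h1 : (1 + R + |y|) ^ (-s) ≤ (1 + |y|) ^ (-s) :=
      Real.rpow_le_rpow_of_nonpos (habs y) (by linarith) (by linarith)
    calc (1 + R + |y|) ^ (-s) * (1 + |y|) ^ (-γ)
        ≤ (1 + |y|) ^ (-s) * (1 + |y|) ^ (-γ) :=
          mul_le_mul_of_nonneg_right h1 (Real.rpow_nonneg (habs y).le _)
      _ = (1 + |y|) ^ (-(s+γ)) := by
          rw [← Real.rpow_add (habs y)]; ring_nf
  have hf_cont : Continuous fun y : ℝ => (1 + R + |y|) ^ (-s) * (1 + |y|) ^ (-γ) := by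
    apply Continuous.mul
    · exact Continuous.rpow_const (by continuity) (fun y => Or.inl (habs2 y).ne')
    · exact Continuous.rpow_const (by continuity) (fun y => Or.inl (habs y).ne')
  have hf_nonneg : ∀ y : ℝ, 0 ≤ (1 + R + |y|) ^ (-s) * (1 + |y|) ^ (-γ) := fun y => by positivity
  have hfint : Integrable (fun y : ℝ => (1 + R + |y|) ^ (-s) * (1 + |y|) ^ (-γ)) := by
    refine hbase.mono' hf_cont.aestronglyMeasurable (ae_of_all _ fun y => ?_)
    rw [Real.norm_eq_abs, abs_of_nonneg (hf_nonneg y)]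
    exact hfle y
  refine ⟨hfint, ?_⟩
  -- majorants
  set g1 : ℝ → ℝ := fun y =>
    (1+R) ^ (-s) * (Icc (-R) R).indicator (fun y : ℝ => (1 + |y|) ^ (-γ)) y with hg1def
  set g2 : ℝ → ℝ := fun y =>
    (Ioi R).indicator (fun t : ℝ => (1 + t) ^ (-(s+γ))) |y| with hg2def
  obtain ⟨hfront_int, hfront_bd⟩ := front_int hγ0 hγ1 hR
  obtain ⟨htail_int, htail_eq⟩ := tail_int hsγ hR
  have hg1int : Integrable g1 := hfront_int.const_mul _
  have hg2int : Integrable g2 := my_integrable_comp_abs htail_int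
  have hle : ∀ y : ℝ, (1 + R + |y|) ^ (-s) * (1 + |y|) ^ (-γ) ≤ g1 y + g2 y := by
    intro y
    by_cases hy : |y| ≤ R
    · have h1 : y ∈ Icc (-R) R := mem_Icc.mpr (abs_le.mp hy)
      have h2 : |y| ∉ Ioi R := by simp [hy, not_lt]
      rw [hg1def, hg2def]
      simp only [Set.indicator_of_mem h1, Set.indicator_of_notMem h2, add_zero]
      have h3 : (1 + R + |y|) ^ (-s) ≤ (1+R) ^ (-s) :=
        Real.rpow_le_rpow_of_nonpos h1R (by linarith [abs_nonneg y]) (by linarith)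
      exact mul_le_mul_of_nonneg_right h3 (Real.rpow_nonneg (habs y).le _)
    · have h1 : y ∉ Icc (-R) R := by rw [mem_Icc]; exact fun hmem => hy (abs_le.mpr hmem)
      have h2 : |y| ∈ Ioi R := mem_Ioi.mpr (lt_of_not_ge hy)
      rw [hg1def, hg2def]
      simp only [Set.indicator_of_notMem h1, Set.indicator_of_mem h2, mul_zero, zero_add]
      exact hfle y
  have hsum : ∫ y : ℝ, (1 + R + |y|) ^ (-s) * (1 + |y|) ^ (-γ) ≤ (∫ y, g1 y) + ∫ y, g2 y := by
    rw [← integral_add hg1int hg2int]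
    exact integral_mono hfint (hg1int.add hg2int) hle
  have hI1 : ∫ y, g1 y ≤ (2 / (1 - γ)) * (1 + R) ^ (1 - s - γ) := by
    rw [hg1def]
    rw [MeasureTheory.integral_const_mul]
    calc (1+R) ^ (-s) * ∫ y, (Icc (-R) R).indicator (fun y : ℝ => (1 + |y|) ^ (-γ)) y
        ≤ (1+R) ^ (-s) * (2 * ((1 + R) ^ (1 - γ) / (1 - γ))) :=
          mul_le_mul_of_nonneg_left hfront_bd (Real.rpow_nonneg h1R.le _)
      _ = (2 / (1 - γ)) * ((1+R) ^ (-s) * (1 + R) ^ (1 - γ)) := by ring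
      _ = (2 / (1 - γ)) * (1 + R) ^ (1 - s - γ) := by
          rw [← Real.rpow_add h1R]; ring_nf
  have hI2 : ∫ y, g2 y = (2 / (s + γ - 1)) * (1 + R) ^ (1 - s - γ) := by
    rw [hg2def]
    rw [integral_comp_abs (f := fun t => (Ioi R).indicator (fun t : ℝ => (1 + t) ^ (-(s+γ))) t)]
    have hIoi : Ioi (0:ℝ) ∩ Ioi R = Ioi R := by
      rw [Ioi_inter_Ioi, max_eq_right hR]
    rw [setIntegral_indicator measurableSet_Ioi, hIoi,
      show (∫ t in Ioi R, (1 + t) ^ (-(s+γ)))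
        = ∫ t : ℝ, (Ioi R).indicator (fun t : ℝ => (1 + t) ^ (-(s+γ))) t from
        (integral_indicator measurableSet_Ioi).symm, htail_eq]
    rw [show (1 - (s+γ)) = 1 - s - γ by ring]
    ring
  calc ∫ y : ℝ, (1 + R + |y|) ^ (-s) * (1 + |y|) ^ (-γ)
      ≤ (∫ y, g1 y) + ∫ y, g2 y := hsum
    _ ≤ (2 / (1 - γ)) * (1 + R) ^ (1 - s - γ) + (2 / (s + γ - 1)) * (1 + R) ^ (1 - s - γ) := by
        rw [hI2]; exact add_le_add hI1 le_rfl
    _ = (2 / (1 - γ) + 2 / (s + γ - 1)) * (1 + R) ^ (1 - s - γ) := by ring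
lemma box_int {d x : ℝ} (hd : 0 < d) (hx : |x| ≤ d) :
    IntegrableOn (fun y : ℝ => (1 + 2*d) + 2 * |x - y| ^ (-(1/2) : ℝ)) (Icc (-d) d) ∧
    ∫ y in Icc (-d) d, ((1 + 2*d) + 2 * |x - y| ^ (-(1/2) : ℝ))
      ≤ 2*d*(1+2*d) + 8 * (2*d) ^ ((1:ℝ)/2) := by
  set F4 : ℝ → ℝ := (Icc 0 (2*d)).indicator (fun t : ℝ => t ^ (-(1/2) : ℝ)) with hF4def
  have hF4 : Integrable F4 := by
    refine IntegrableOn.integrable_indicator ?_ measurableSet_Icc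
    rw [← intervalIntegrable_iff_integrableOn_Icc_of_le (by linarith : (0:ℝ) ≤ 2*d)]
    exact intervalIntegral.intervalIntegrable_rpow' (by norm_num)
  set φ : ℝ → ℝ := fun u => F4 |u| with hφdef
  have hφint : Integrable φ := my_integrable_comp_abs hF4
  have hφnonneg : ∀ u, 0 ≤ φ u := by
    intro u
    rw [hφdef, hF4def]
    exact Set.indicator_nonneg (fun t ht => Real.rpow_nonneg ht.1 _) _
  have hφval : ∀ u : ℝ, |u| ≤ 2*d → φ u = |u| ^ (-(1/2) : ℝ) := by
    intro u hu
    have hmem : |u| ∈ Icc (0:ℝ) (2*d) := mem_Icc.mpr ⟨abs_nonneg u, hu⟩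
    simp only [hφdef, hF4def]
    rw [Set.indicator_of_mem hmem]
  have hφtot : ∫ u, φ u = 4 * (2*d) ^ ((1:ℝ)/2) := by
    rw [hφdef]
    rw [integral_comp_abs (f := F4)]
    rw [hF4def, setIntegral_indicator measurableSet_Icc,
      show Ioi (0:ℝ) ∩ Icc 0 (2*d) = Ioc 0 (2*d) by
        ext t
        simp only [mem_inter_iff, mem_Ioi, mem_Icc, mem_Ioc]
        exact ⟨fun h => ⟨h.1, h.2.2⟩, fun h => ⟨h.1, h.1.le, h.2⟩⟩,
      ← intervalIntegral.integral_of_le (by linarith : (0:ℝ) ≤ 2*d),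
      integral_rpow (Or.inl (by norm_num : (-1:ℝ) < -(1/2)))]
    rw [show (-(1/2) : ℝ) + 1 = 1/2 by norm_num, Real.zero_rpow (by norm_num : (1/2 : ℝ) ≠ 0)]
    ring
  -- composed function
  have hcomp : Integrable (fun y : ℝ => φ (x - y)) := by
    simp_rw [sub_eq_add_neg]
    exact (hφint.comp_add_left x).comp_neg
  have hcompint : ∫ y : ℝ, φ (x - y) = ∫ u, φ u := by
    calc ∫ y : ℝ, φ (x - y) = ∫ y : ℝ, (fun z => φ (x + z)) (-y) := by
          simp_rw [sub_eq_add_neg]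
      _ = ∫ z : ℝ, φ (x + z) := by
          simpa using integral_neg_eq_self (fun z => φ (x + z)) volume
      _ = ∫ u, φ u := integral_add_left_eq_self φ x
  have hEq : EqOn (fun y : ℝ => φ (x - y)) (fun y : ℝ => |x - y| ^ (-(1/2) : ℝ)) (Icc (-d) d) := by
    intro y hy
    have h1 : |x - y| ≤ 2*d := by
      rw [mem_Icc] at hy
      have := abs_le.mp hx
      rw [abs_le]; constructor <;> linarith
    exact hφval _ h1
  have hIOn : IntegrableOn (fun y : ℝ => |x - y| ^ (-(1/2) : ℝ)) (Icc (-d) d) :=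
    hcomp.integrableOn.congr_fun hEq measurableSet_Icc
  have hIval : ∫ y in Icc (-d) d, |x - y| ^ (-(1/2) : ℝ) ≤ 4 * (2*d) ^ ((1:ℝ)/2) := by
    calc ∫ y in Icc (-d) d, |x - y| ^ (-(1/2) : ℝ)
        = ∫ y in Icc (-d) d, φ (x - y) := by
          exact (setIntegral_congr_fun measurableSet_Icc hEq).symm
      _ ≤ ∫ y : ℝ, φ (x - y) :=
          setIntegral_le_integral hcomp (ae_of_all _ (fun y => hφnonneg _))
      _ = 4 * (2*d) ^ ((1:ℝ)/2) := by rw [hcompint, hφtot]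
  have hconst : IntegrableOn (fun _ : ℝ => (1 + 2*d)) (Icc (-d) d) :=
    integrableOn_const measure_Icc_lt_top.ne
  have hIcc_vol : (volume (Icc (-d) d)).toReal = 2*d := by
    rw [Real.volume_Icc, ENNReal.toReal_ofReal (by linarith)]
    ring
  constructor
  · exact hconst.add (hIOn.const_mul 2)
  · rw [integral_add hconst (hIOn.const_mul 2), setIntegral_const, integral_const_mul]
    rw [Measure.real, hIcc_vol, smul_eq_mul]
    nlinarith [hIval, Real.rpow_nonneg (by linarith : (0:ℝ) ≤ 2*d) ((1:ℝ)/2)]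

lemma log_le_rpow {t : ℝ} (ht : 0 < t) : 1 + |Real.log t| ≤ 1 + t + 2 * t ^ (-(1/2) : ℝ) := by
  have hrp : (0:ℝ) ≤ t ^ (-(1/2) : ℝ) := Real.rpow_nonneg ht.le _
  rcases le_or_gt 1 t with h1 | h1
  · rw [abs_of_nonneg (Real.log_nonneg h1)]
    have := Real.log_le_sub_one_of_pos ht
    linarith
  · rw [abs_of_nonpos (Real.log_nonpos ht.le h1.le)]
    have h2 := Real.log_le_sub_one_of_pos (Real.rpow_pos_of_pos ht (-(1/2) : ℝ))
    rw [Real.log_rpow ht] at h2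
    linarith

lemma opD_est (α m : ℝ) (hα0 : 0 < α) (hα : α < 1/2) (hm : 0 ≤ m) (kD : ℝ → ℝ → ℂ)
    (hmeas : Measurable (Function.uncurry kD))
    (hbd : ∀ x y : ℝ, ‖kD x y‖ ≤ m * (1 + |x| + |y|) ^ (-(1/2) : ℝ))
    (τ : ℝ → ℂ) (hτcont : Continuous τ) (N : ℝ) (hN : 0 ≤ N)
    (hτbd : ∀ y : ℝ, ‖τ y‖ ≤ N * (1 + |y|) ^ (-(α+1/2))) (x : ℝ) :
    Integrable (fun y => kD x y * τ y) ∧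
    ‖∫ y : ℝ, kD x y * τ y‖ ≤
      m * N * (2/(1-(α+1/2)) + 2/(1/2+(α+1/2)-1)) * (1 + |x|) ^ (-α) := by
  have key := key_int (s := 1/2) (γ := α + 1/2) (R := |x|)
    (by norm_num) (by linarith) (by linarith) (by linarith) (abs_nonneg x)
  have hmaj : ∀ y : ℝ, ‖kD x y * τ y‖ ≤
      (m * N) * ((1 + |x| + |y|) ^ (-(1/2) : ℝ) * (1 + |y|) ^ (-(α+1/2))) := by
    intro y
    rw [norm_mul]
    calc ‖kD x y‖ * ‖τ y‖ ≤ (m * (1 + |x| + |y|) ^ (-(1/2) : ℝ)) * (N * (1 + |y|) ^ (-(α+1/2))) :=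
          mul_le_mul (hbd x y) (hτbd y) (norm_nonneg _) (by positivity)
      _ = (m * N) * ((1 + |x| + |y|) ^ (-(1/2) : ℝ) * (1 + |y|) ^ (-(α+1/2))) := by ring
  have hASM : AEStronglyMeasurable (fun y => kD x y * τ y) volume :=
    ((hmeas.of_uncurry_left).mul hτcont.measurable).aestronglyMeasurable
  have hint : Integrable (fun y => kD x y * τ y) :=
    (key.1.const_mul (m*N)).mono' hASM (ae_of_all _ hmaj)
  refine ⟨hint, ?_⟩
  calc ‖∫ y : ℝ, kD x y * τ y‖
      ≤ ∫ y : ℝ, (m * N) * ((1 + |x| + |y|) ^ (-(1/2) : ℝ) * (1 + |y|) ^ (-(α+1/2))) :=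
        norm_integral_le_of_norm_le (key.1.const_mul (m*N)) (ae_of_all _ hmaj)
    _ = (m * N) * ∫ y : ℝ, (1 + |x| + |y|) ^ (-(1/2) : ℝ) * (1 + |y|) ^ (-(α+1/2)) :=
        integral_const_mul _ _
    _ ≤ (m * N) * ((2 / (1 - (α+1/2)) + 2 / (1/2 + (α+1/2) - 1)) * (1 + |x|) ^ (1 - 1/2 - (α+1/2))) := by
        apply mul_le_mul_of_nonneg_left key.2 (by positivity)
    _ = m * N * (2/(1-(α+1/2)) + 2/(1/2+(α+1/2)-1)) * (1 + |x|) ^ (-α) := by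
        rw [show (1 - 1/2 - (α+1/2) : ℝ) = -α by ring]
        ring

set_option maxHeartbeats 2000000 in
lemma opC_est (α d m : ℝ) (hα0 : 0 < α) (hα : α < 1/2) (hd : 0 < d) (hm : 0 ≤ m)
    (kC : ℝ → ℝ → ℂ) (hmeas : Measurable (Function.uncurry kC))
    (hbd1 : ∀ x y : ℝ, d < max (|x|) (|y|) → ‖kC x y‖ ≤ m * (1 + |x| + |y|) ^ (-(3/2) : ℝ))
    (hbd2 : ∀ x y : ℝ, |x| ≤ d → |y| ≤ d → x ≠ y → ‖kC x y‖ ≤ m * (1 + |Real.log (|x - y|)|))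
    (σ : ℝ → ℂ) (hσcont : Continuous σ) (N : ℝ) (hN : 0 ≤ N)
    (hσbd : ∀ y : ℝ, ‖σ y‖ ≤ N * (1 + |y|) ^ (-α)) (x : ℝ) :
    Integrable (fun y => kC x y * σ y) ∧
    ‖∫ y : ℝ, kC x y * σ y‖ ≤
      m * N * ((2/(1-α) + 2/(3/2+α-1)) + (2*d*(1+2*d) + 8*(2*d) ^ ((1:ℝ)/2)) * (1+d))
        * (1 + |x|) ^ (-(α+1/2)) := by
  set CA : ℝ := 2/(1-α) + 2/(3/2+α-1) with hCAdef
  set CB : ℝ := 2*d*(1+2*d) + 8*(2*d) ^ ((1:ℝ)/2) with hCBdef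
  have hCB : 0 ≤ CB := by
    have : (0:ℝ) ≤ (2*d) ^ ((1:ℝ)/2) := Real.rpow_nonneg (by linarith) _
    rw [hCBdef]; nlinarith
  have hCA : 0 ≤ CA := by
    rw [hCAdef]
    have h1 : (0:ℝ) < 1 - α := by linarith
    have h2 : (0:ℝ) < 3/2 + α - 1 := by linarith
    positivity
  have key := key_int (s := 3/2) (γ := α) (R := |x|)
    (by norm_num) (by linarith) (by linarith) (by linarith) (abs_nonneg x)
  have hXnn : (0:ℝ) ≤ (1 + |x|) ^ (-(α+1/2)) := Real.rpow_nonneg (by positivity) _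
  have hW1nn : ∀ y : ℝ, 0 ≤ (1 + |x| + |y|) ^ (-(3/2) : ℝ) * (1 + |y|) ^ (-α) := by
    intro y; positivity
  have hkey2 : ∫ y : ℝ, (1 + |x| + |y|) ^ (-(3/2) : ℝ) * (1 + |y|) ^ (-α)
      ≤ CA * (1 + |x|) ^ (-(α+1/2)) := by
    have := key.2
    rwa [show (1 - 3/2 - α : ℝ) = -(α+1/2) by ring] at this
  have hASM : AEStronglyMeasurable (fun y => kC x y * σ y) volume :=
    ((hmeas.of_uncurry_left).mul hσcont.measurable).aestronglyMeasurable
  have hσ1 : ∀ y : ℝ, ‖σ y‖ ≤ N := by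
    intro y
    refine (hσbd y).trans ?_
    have : (1 + |y|) ^ (-α) ≤ 1 :=
      Real.rpow_le_one_of_one_le_of_nonpos (by linarith [abs_nonneg y]) (by linarith)
    nlinarith
  by_cases hxd : |x| ≤ d
  · -- near case
    obtain ⟨hBon, hBval⟩ := box_int hd hxd
    set B : ℝ → ℝ := (Icc (-d) d).indicator
      (fun y : ℝ => (1 + 2*d) + 2 * |x - y| ^ (-(1/2) : ℝ)) with hBdef
    have hBint : Integrable B := hBon.integrable_indicator measurableSet_Icc
    have hBnn : ∀ y : ℝ, 0 ≤ B y := by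
      intro y
      rw [hBdef]
      refine Set.indicator_nonneg (fun z _ => ?_) _
      have : (0:ℝ) ≤ |x - z| ^ (-(1/2) : ℝ) := Real.rpow_nonneg (abs_nonneg _) _
      nlinarith
    have hmaj : ∀ y : ℝ, y ≠ x → ‖kC x y * σ y‖ ≤
        (m * N) * ((1 + |x| + |y|) ^ (-(3/2) : ℝ) * (1 + |y|) ^ (-α) + B y) := by
      intro y hyx
      rw [norm_mul]
      by_cases hyd : |y| ≤ d
      · have hxy : x ≠ y := fun h => hyx h.symm
        have ht : (0:ℝ) < |x - y| := abs_pos.mpr (sub_ne_zero.mpr hxy)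
        have hlog := log_le_rpow ht
        have hxy2d : |x - y| ≤ 2*d := by
          have h1 := abs_le.mp hxd
          have h2 := abs_le.mp hyd
          rw [abs_le]; constructor <;> [linarith; linarith]
        have hBy : B y = (1 + 2*d) + 2 * |x - y| ^ (-(1/2) : ℝ) := by
          rw [hBdef, Set.indicator_of_mem (mem_Icc.mpr (abs_le.mp hyd))]
        have h3 : ‖kC x y‖ ≤ m * ((1 + 2*d) + 2 * |x - y| ^ (-(1/2) : ℝ)) := by
          refine (hbd2 x y hxd hyd hxy).trans ?_
          have : 1 + |Real.log (|x - y|)| ≤ (1 + 2*d) + 2 * |x - y| ^ (-(1/2) : ℝ) := by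
            have := log_le_rpow ht
            linarith
          nlinarith
        calc ‖kC x y‖ * ‖σ y‖ ≤ (m * ((1 + 2*d) + 2 * |x - y| ^ (-(1/2) : ℝ))) * N :=
              mul_le_mul h3 (hσ1 y) (norm_nonneg _) (by positivity)
          _ = (m * N) * B y := by rw [hBy]; ring
          _ ≤ (m * N) * ((1 + |x| + |y|) ^ (-(3/2) : ℝ) * (1 + |y|) ^ (-α) + B y) :=
              mul_le_mul_of_nonneg_left (le_add_of_nonneg_left (hW1nn y)) (mul_nonneg hm hN)
      · have hmax : d < max (|x|) (|y|) := lt_of_lt_of_le (lt_of_not_ge hyd) (le_max_right _ _)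
        have h3 := hbd1 x y hmax
        calc ‖kC x y‖ * ‖σ y‖
            ≤ (m * (1 + |x| + |y|) ^ (-(3/2) : ℝ)) * (N * (1 + |y|) ^ (-α)) :=
              mul_le_mul h3 (hσbd y) (norm_nonneg _) (by positivity)
          _ = (m * N) * ((1 + |x| + |y|) ^ (-(3/2) : ℝ) * (1 + |y|) ^ (-α)) := by ring
          _ ≤ (m * N) * ((1 + |x| + |y|) ^ (-(3/2) : ℝ) * (1 + |y|) ^ (-α) + B y) :=
              mul_le_mul_of_nonneg_left (le_add_of_nonneg_right (hBnn y)) (mul_nonneg hm hN)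
    have haex : ∀ᵐ y : ℝ, y ≠ x := by
      rw [MeasureTheory.ae_iff]
      simp only [not_ne_iff]
      rw [show {y : ℝ | y = x} = {x} from Set.setOf_eq_eq_singleton]
      exact Real.volume_singleton
    have hmajae : ∀ᵐ y : ℝ, ‖kC x y * σ y‖ ≤
        (m * N) * ((1 + |x| + |y|) ^ (-(3/2) : ℝ) * (1 + |y|) ^ (-α) + B y) :=
      haex.mono fun y hy => hmaj y hy
    have hWint : Integrable (fun y : ℝ =>
        (m * N) * ((1 + |x| + |y|) ^ (-(3/2) : ℝ) * (1 + |y|) ^ (-α) + B y)) :=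
      (key.1.add hBint).const_mul _
    have hint : Integrable (fun y => kC x y * σ y) := hWint.mono' hASM hmajae
    refine ⟨hint, ?_⟩
    have hBle : ∫ y : ℝ, B y ≤ CB := by
      rw [hBdef, integral_indicator measurableSet_Icc]
      exact hBval
    have h1x : (1 + |x|) ^ (α + 1/2) ≤ 1 + d := by
      calc (1 + |x|) ^ (α + 1/2) ≤ (1 + d) ^ (α + 1/2) :=
            Real.rpow_le_rpow (by positivity) (by linarith) (by linarith)
        _ ≤ (1 + d) ^ (1:ℝ) :=
            Real.rpow_le_rpow_of_exponent_le (by linarith) (by linarith)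
        _ = 1 + d := Real.rpow_one _
    have h1X : 1 ≤ (1 + d) * (1 + |x|) ^ (-(α+1/2)) := by
      have hA : (0:ℝ) < (1 + |x|) ^ (α + 1/2) := Real.rpow_pos_of_pos (by positivity) _
      have h2 : (1 + |x|) ^ (-(α+1/2)) = ((1 + |x|) ^ (α+1/2))⁻¹ := by
        rw [← Real.rpow_neg (by positivity : (0:ℝ) ≤ 1 + |x|)]
      rw [h2]
      calc (1:ℝ) = (1 + |x|) ^ (α+1/2) * ((1 + |x|) ^ (α+1/2))⁻¹ :=
            (mul_inv_cancel₀ hA.ne').symm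
        _ ≤ (1 + d) * ((1 + |x|) ^ (α+1/2))⁻¹ :=
            mul_le_mul_of_nonneg_right h1x (by positivity)
    calc ‖∫ y : ℝ, kC x y * σ y‖
        ≤ ∫ y : ℝ, (m * N) * ((1 + |x| + |y|) ^ (-(3/2) : ℝ) * (1 + |y|) ^ (-α) + B y) :=
          norm_integral_le_of_norm_le hWint hmajae
      _ = (m * N) * ((∫ y : ℝ, (1 + |x| + |y|) ^ (-(3/2) : ℝ) * (1 + |y|) ^ (-α)) + ∫ y : ℝ, B y) := by
          rw [integral_const_mul, integral_add key.1 hBint]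
      _ ≤ (m * N) * (CA * (1 + |x|) ^ (-(α+1/2)) + CB * ((1 + d) * (1 + |x|) ^ (-(α+1/2)))) := by
          apply mul_le_mul_of_nonneg_left _ (mul_nonneg hm hN)
          have h5 : ∫ y : ℝ, B y ≤ CB * ((1 + d) * (1 + |x|) ^ (-(α+1/2))) := by
            calc ∫ y : ℝ, B y ≤ CB := hBle
              _ = CB * 1 := (mul_one _).symm
              _ ≤ CB * ((1 + d) * (1 + |x|) ^ (-(α+1/2))) :=
                  mul_le_mul_of_nonneg_left h1X hCB
          exact add_le_add hkey2 h5
      _ = m * N * (CA + CB * (1+d)) * (1 + |x|) ^ (-(α+1/2)) := by ring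
  · -- far case
    have hmaj : ∀ y : ℝ, ‖kC x y * σ y‖ ≤
        (m * N) * ((1 + |x| + |y|) ^ (-(3/2) : ℝ) * (1 + |y|) ^ (-α)) := by
      intro y
      have hmax : d < max (|x|) (|y|) := lt_of_lt_of_le (lt_of_not_ge hxd) (le_max_left _ _)
      rw [norm_mul]
      calc ‖kC x y‖ * ‖σ y‖
          ≤ (m * (1 + |x| + |y|) ^ (-(3/2) : ℝ)) * (N * (1 + |y|) ^ (-α)) :=
            mul_le_mul (hbd1 x y hmax) (hσbd y) (norm_nonneg _) (by positivity)
        _ = (m * N) * ((1 + |x| + |y|) ^ (-(3/2) : ℝ) * (1 + |y|) ^ (-α)) := by ring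
    have hint : Integrable (fun y => kC x y * σ y) :=
      (key.1.const_mul (m*N)).mono' hASM (ae_of_all _ hmaj)
    refine ⟨hint, ?_⟩
    calc ‖∫ y : ℝ, kC x y * σ y‖
        ≤ ∫ y : ℝ, (m * N) * ((1 + |x| + |y|) ^ (-(3/2) : ℝ) * (1 + |y|) ^ (-α)) :=
          norm_integral_le_of_norm_le (key.1.const_mul (m*N)) (ae_of_all _ hmaj)
      _ = (m * N) * ∫ y : ℝ, (1 + |x| + |y|) ^ (-(3/2) : ℝ) * (1 + |y|) ^ (-α) :=
          integral_const_mul _ _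
      _ ≤ (m * N) * (CA * (1 + |x|) ^ (-(α+1/2))) :=
          mul_le_mul_of_nonneg_left hkey2 (mul_nonneg hm hN)
      _ ≤ m * N * (CA + CB * (1+d)) * (1 + |x|) ^ (-(α+1/2)) := by
          have h6 : CA ≤ CA + CB * (1+d) :=
            le_add_of_nonneg_right (mul_nonneg hCB (by linarith))
          have h7 : m * N * CA ≤ m * N * (CA + CB * (1+d)) :=
            mul_le_mul_of_nonneg_left h6 (mul_nonneg hm hN)
          calc m * N * (CA * (1 + |x|) ^ (-(α+1/2)))
              = (m * N * CA) * (1 + |x|) ^ (-(α+1/2)) := by ring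
            _ ≤ (m * N * (CA + CB * (1+d))) * (1 + |x|) ^ (-(α+1/2)) :=
                mul_le_mul_of_nonneg_right h7 hXnn

set_option maxHeartbeats 2000000 in
/-- For `0 < α < 1/2` and `d > 0` there is a constant `M_α > 0` so that
for any `m > 0` and any measurable kernels `k_D, k_C` satisfying the decay estimates
(i)–(ii) and the continuity property (iii), if `M_α · m < 1`, then for all
`g ∈ C_α(ℝ)`, `h ∈ C_{α+1/2}(ℝ)` there is a unique pair
`(σ, τ) ∈ C_α(ℝ) × C_{α+1/2}(ℝ)` solving the 2×2 system of boundary integral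
equations `σ + k_D τ = g`, `k_C σ + τ = h`. -/
theorem small_contrast_solvability (α d : ℝ) (hα0 : 0 < α) (hα : α < 1 / 2) (hd : 0 < d) :
    ∃ M : ℝ, 0 < M ∧ ∀ m : ℝ, 0 < m →
      ∀ kD kC : ℝ → ℝ → ℂ,
        Measurable (Function.uncurry kD) → Measurable (Function.uncurry kC) →
        (∀ x y : ℝ, ‖kD x y‖ ≤ m * (1 + |x| + |y|) ^ (-(1 / 2) : ℝ)) →
        (∀ x y : ℝ, d < max (|x|) (|y|) →
          ‖kC x y‖ ≤ m * (1 + |x| + |y|) ^ (-(3 / 2) : ℝ)) →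
        (∀ x y : ℝ, |x| ≤ d → |y| ≤ d → x ≠ y →
          ‖kC x y‖ ≤ m * (1 + |Real.log (|x - y|)|)) →
        (∀ τ : ℝ → ℂ, Continuous τ →
          BddAbove (Set.range fun y => (1 + |y|) ^ (α + 1 / 2) * ‖τ y‖) →
          Continuous fun x => ∫ y : ℝ, kD x y * τ y) →
        (∀ σ : ℝ → ℂ, Continuous σ →
          BddAbove (Set.range fun y => (1 + |y|) ^ α * ‖σ y‖) →
          Continuous fun x => ∫ y : ℝ, kC x y * σ y) →
        M * m < 1 →
        ∀ g h : ℝ → ℂ,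
          Continuous g → BddAbove (Set.range fun x => (1 + |x|) ^ α * ‖g x‖) →
          Continuous h → BddAbove (Set.range fun x => (1 + |x|) ^ (α + 1 / 2) * ‖h x‖) →
          ∃! p : (ℝ → ℂ) × (ℝ → ℂ),
            (Continuous p.1 ∧ BddAbove (Set.range fun x => (1 + |x|) ^ α * ‖p.1 x‖)) ∧
            (Continuous p.2 ∧
              BddAbove (Set.range fun x => (1 + |x|) ^ (α + 1 / 2) * ‖p.2 x‖)) ∧
            (∀ x : ℝ, p.1 x + ∫ y : ℝ, kD x y * p.2 y = g x) ∧
            (∀ x : ℝ, (∫ y : ℝ, kC x y * p.1 y) + p.2 x = h x) := by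
  set CD : ℝ := 2/(1-(α+1/2)) + 2/(1/2+(α+1/2)-1) with hCDdef
  set CC : ℝ := (2/(1-α) + 2/(3/2+α-1)) + (2*d*(1+2*d) + 8*(2*d) ^ ((1:ℝ)/2)) * (1+d)
    with hCCdef
  have hCDpos : 0 < CD := by
    rw [hCDdef]
    have h1 : (0:ℝ) < 1 - (α+1/2) := by linarith
    have h2 : (0:ℝ) < 1/2 + (α+1/2) - 1 := by linarith
    positivity
  have hCCpos : 0 < CC := by
    rw [hCCdef]
    have h1 : (0:ℝ) < 1 - α := by linarith
    have h2 : (0:ℝ) < 3/2 + α - 1 := by linarith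
    have h3 : (0:ℝ) ≤ (2*d) ^ ((1:ℝ)/2) := Real.rpow_nonneg (by linarith) _
    have h4 : (0:ℝ) < 2/(1-α) + 2/(3/2+α-1) := by positivity
    have h5 : (0:ℝ) ≤ (2*d*(1+2*d) + 8*(2*d) ^ ((1:ℝ)/2)) * (1+d) :=
      mul_nonneg (by nlinarith) (by linarith)
    linarith
  refine ⟨CD + CC, by linarith, ?_⟩
  intro m hm kD kC hkDmeas hkCmeas hkDbd hkCbd1 hkCbd2 hcontD hcontC hMm g h hgcont hgbd
    hhcont hhbd
  have h1pos : ∀ x : ℝ, (0:ℝ) < 1 + |x| := fun x => by positivity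
  set w1 : ℝ → ℝ := fun x => (1 + |x|) ^ α with hw1def
  set w2 : ℝ → ℝ := fun x => (1 + |x|) ^ (α + 1/2) with hw2def
  have hw1pos : ∀ x, 0 < w1 x := fun x => Real.rpow_pos_of_pos (h1pos x) _
  have hw2pos : ∀ x, 0 < w2 x := fun x => Real.rpow_pos_of_pos (h1pos x) _
  have hw1cont : Continuous w1 :=
    Continuous.rpow_const (by continuity) (fun x => Or.inl (h1pos x).ne')
  have hw2cont : Continuous w2 :=
    Continuous.rpow_const (by continuity) (fun x => Or.inl (h1pos x).ne')
  have hw2inv : ∀ y, (w2 y)⁻¹ = (1+|y|) ^ (-(α+1/2)) := fun y => by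
    rw [hw2def, ← Real.rpow_neg (h1pos y).le]
  have hw1inv : ∀ y, (w1 y)⁻¹ = (1+|y|) ^ (-α) := fun y => by
    rw [hw1def, ← Real.rpow_neg (h1pos y).le]
  have hw1cancel : ∀ x, w1 x * (1+|x|) ^ (-α) = 1 := fun x => by
    rw [hw1def, ← Real.rpow_add (h1pos x), add_neg_cancel, Real.rpow_zero]
  have hw2cancel : ∀ x, w2 x * (1+|x|) ^ (-(α+1/2)) = 1 := fun x => by
    rw [hw2def, ← Real.rpow_add (h1pos x), add_neg_cancel, Real.rpow_zero]
  -- τ-lift for BCF v with weight w2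
  have hτcont : ∀ v : BoundedContinuousFunction ℝ ℂ, Continuous (fun y => (w2 y)⁻¹ • v y) :=
    fun v => (hw2cont.inv₀ (fun y => (hw2pos y).ne')).smul v.continuous
  have hσcont : ∀ u : BoundedContinuousFunction ℝ ℂ, Continuous (fun y => (w1 y)⁻¹ • u y) :=
    fun u => (hw1cont.inv₀ (fun y => (hw1pos y).ne')).smul u.continuous
  have hτbd : ∀ (v : BoundedContinuousFunction ℝ ℂ) (y : ℝ),
      ‖(w2 y)⁻¹ • v y‖ ≤ ‖v‖ * (1+|y|) ^ (-(α+1/2)) := by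
    intro v y
    calc ‖(w2 y)⁻¹ • v y‖ = (1+|y|) ^ (-(α+1/2)) * ‖v y‖ := by
          rw [norm_smul, Real.norm_eq_abs, abs_of_pos (inv_pos.mpr (hw2pos y)), hw2inv y]
      _ ≤ (1+|y|) ^ (-(α+1/2)) * ‖v‖ :=
          mul_le_mul_of_nonneg_left (v.norm_coe_le_norm y) (Real.rpow_nonneg (h1pos y).le _)
      _ = ‖v‖ * (1+|y|) ^ (-(α+1/2)) := mul_comm _ _
  have hσbd : ∀ (u : BoundedContinuousFunction ℝ ℂ) (y : ℝ),
      ‖(w1 y)⁻¹ • u y‖ ≤ ‖u‖ * (1+|y|) ^ (-α) := by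
    intro u y
    calc ‖(w1 y)⁻¹ • u y‖ = (1+|y|) ^ (-α) * ‖u y‖ := by
          rw [norm_smul, Real.norm_eq_abs, abs_of_pos (inv_pos.mpr (hw1pos y)), hw1inv y]
      _ ≤ (1+|y|) ^ (-α) * ‖u‖ :=
          mul_le_mul_of_nonneg_left (u.norm_coe_le_norm y) (Real.rpow_nonneg (h1pos y).le _)
      _ = ‖u‖ * (1+|y|) ^ (-α) := mul_comm _ _
  have hτrange : ∀ v : BoundedContinuousFunction ℝ ℂ,
      BddAbove (Set.range fun y => w2 y * ‖(w2 y)⁻¹ • v y‖) := by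
    intro v
    refine ⟨‖v‖, fun z hz => ?_⟩
    obtain ⟨y, rfl⟩ := hz
    calc w2 y * ‖(w2 y)⁻¹ • v y‖
        ≤ w2 y * (‖v‖ * (1+|y|) ^ (-(α+1/2))) :=
          mul_le_mul_of_nonneg_left (hτbd v y) (hw2pos y).le
      _ = (w2 y * (1+|y|) ^ (-(α+1/2))) * ‖v‖ := by ring
      _ = ‖v‖ := by rw [hw2cancel y, one_mul]
  have hσrange : ∀ u : BoundedContinuousFunction ℝ ℂ,
      BddAbove (Set.range fun y => w1 y * ‖(w1 y)⁻¹ • u y‖) := by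
    intro u
    refine ⟨‖u‖, fun z hz => ?_⟩
    obtain ⟨y, rfl⟩ := hz
    calc w1 y * ‖(w1 y)⁻¹ • u y‖
        ≤ w1 y * (‖u‖ * (1+|y|) ^ (-α)) :=
          mul_le_mul_of_nonneg_left (hσbd u y) (hw1pos y).le
      _ = (w1 y * (1+|y|) ^ (-α)) * ‖u‖ := by ring
      _ = ‖u‖ := by rw [hw1cancel y, one_mul]
  -- the two integral operators
  have hDop : ∀ (v : BoundedContinuousFunction ℝ ℂ) (x : ℝ),
      Integrable (fun y => kD x y * ((w2 y)⁻¹ • v y)) ∧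
      ‖∫ y : ℝ, kD x y * ((w2 y)⁻¹ • v y)‖ ≤ m * ‖v‖ * CD * (1+|x|) ^ (-α) := by
    intro v x
    have := opD_est α m hα0 hα hm.le kD hkDmeas hkDbd (fun y => (w2 y)⁻¹ • v y)
      (hτcont v) ‖v‖ (norm_nonneg v) (hτbd v) x
    exact ⟨this.1, by rw [hCDdef]; exact this.2⟩
  have hCop : ∀ (u : BoundedContinuousFunction ℝ ℂ) (x : ℝ),
      Integrable (fun y => kC x y * ((w1 y)⁻¹ • u y)) ∧
      ‖∫ y : ℝ, kC x y * ((w1 y)⁻¹ • u y)‖ ≤ m * ‖u‖ * CC * (1+|x|) ^ (-(α+1/2)) := by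
    intro u x
    have := opC_est α d m hα0 hα hd hm.le kC hkCmeas hkCbd1 hkCbd2 (fun y => (w1 y)⁻¹ • u y)
      (hσcont u) ‖u‖ (norm_nonneg u) (hσbd u) x
    exact ⟨this.1, by rw [hCCdef]; exact this.2⟩
  have hADnorm : ∀ (v : BoundedContinuousFunction ℝ ℂ) (x : ℝ),
      ‖w1 x • ∫ y : ℝ, kD x y * ((w2 y)⁻¹ • v y)‖ ≤ m * CD * ‖v‖ := by
    intro v x
    rw [norm_smul, Real.norm_eq_abs, abs_of_pos (hw1pos x)]
    calc w1 x * ‖∫ y : ℝ, kD x y * ((w2 y)⁻¹ • v y)‖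
        ≤ w1 x * (m * ‖v‖ * CD * (1+|x|) ^ (-α)) :=
          mul_le_mul_of_nonneg_left (hDop v x).2 (hw1pos x).le
      _ = (m * CD * ‖v‖) * (w1 x * (1+|x|) ^ (-α)) := by ring
      _ = m * CD * ‖v‖ := by rw [hw1cancel x, mul_one]
  have hACnorm : ∀ (u : BoundedContinuousFunction ℝ ℂ) (x : ℝ),
      ‖w2 x • ∫ y : ℝ, kC x y * ((w1 y)⁻¹ • u y)‖ ≤ m * CC * ‖u‖ := by
    intro u x
    rw [norm_smul, Real.norm_eq_abs, abs_of_pos (hw2pos x)]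
    calc w2 x * ‖∫ y : ℝ, kC x y * ((w1 y)⁻¹ • u y)‖
        ≤ w2 x * (m * ‖u‖ * CC * (1+|x|) ^ (-(α+1/2))) :=
          mul_le_mul_of_nonneg_left (hCop u x).2 (hw2pos x).le
      _ = (m * CC * ‖u‖) * (w2 x * (1+|x|) ^ (-(α+1/2))) := by ring
      _ = m * CC * ‖u‖ := by rw [hw2cancel x, mul_one]
  let AD : BoundedContinuousFunction ℝ ℂ → BoundedContinuousFunction ℝ ℂ := fun v =>
    BoundedContinuousFunction.ofNormedAddCommGroup
      (fun x => w1 x • ∫ y : ℝ, kD x y * ((w2 y)⁻¹ • v y))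
      (hw1cont.smul (hcontD _ (hτcont v) (hτrange v)))
      (m * CD * ‖v‖) (hADnorm v)
  let AC : BoundedContinuousFunction ℝ ℂ → BoundedContinuousFunction ℝ ℂ := fun u =>
    BoundedContinuousFunction.ofNormedAddCommGroup
      (fun x => w2 x • ∫ y : ℝ, kC x y * ((w1 y)⁻¹ • u y))
      (hw2cont.smul (hcontC _ (hσcont u) (hσrange u)))
      (m * CC * ‖u‖) (hACnorm u)
  have hADapp : ∀ v x, AD v x = w1 x • ∫ y : ℝ, kD x y * ((w2 y)⁻¹ • v y) := fun v x => rfl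
  have hACapp : ∀ u x, AC u x = w2 x • ∫ y : ℝ, kC x y * ((w1 y)⁻¹ • u y) := fun u x => rfl
  have hADsub : ∀ (v v' : BoundedContinuousFunction ℝ ℂ) (x : ℝ),
      AD v x - AD v' x = AD (v - v') x := by
    intro v v' x
    rw [hADapp, hADapp, hADapp, ← smul_sub, ← integral_sub (hDop v x).1 (hDop v' x).1]
    congr 1
    apply integral_congr_ae
    apply ae_of_all
    intro y
    simp only [BoundedContinuousFunction.coe_sub, Pi.sub_apply]
    rw [smul_sub, mul_sub]
  have hACsub : ∀ (u u' : BoundedContinuousFunction ℝ ℂ) (x : ℝ),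
      AC u x - AC u' x = AC (u - u') x := by
    intro u u' x
    rw [hACapp, hACapp, hACapp, ← smul_sub, ← integral_sub (hCop u x).1 (hCop u' x).1]
    congr 1
    apply integral_congr_ae
    apply ae_of_all
    intro y
    simp only [BoundedContinuousFunction.coe_sub, Pi.sub_apply]
    rw [smul_sub, mul_sub]
  -- right-hand sides as BCF
  obtain ⟨Cg, hCg⟩ := hgbd
  obtain ⟨Ch, hCh⟩ := hhbd
  have hGnorm : ∀ x, ‖w1 x • g x‖ ≤ Cg := by
    intro x
    rw [norm_smul, Real.norm_eq_abs, abs_of_pos (hw1pos x)]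
    exact hCg (Set.mem_range_self x)
  have hHnorm : ∀ x, ‖w2 x • h x‖ ≤ Ch := by
    intro x
    rw [norm_smul, Real.norm_eq_abs, abs_of_pos (hw2pos x)]
    exact hCh (Set.mem_range_self x)
  let Gb : BoundedContinuousFunction ℝ ℂ :=
    BoundedContinuousFunction.ofNormedAddCommGroup _ (hw1cont.smul hgcont) Cg hGnorm
  let Hb : BoundedContinuousFunction ℝ ℂ :=
    BoundedContinuousFunction.ofNormedAddCommGroup _ (hw2cont.smul hhcont) Ch hHnorm
  have hGapp : ∀ x, Gb x = w1 x • g x := fun x => rfl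
  have hHapp : ∀ x, Hb x = w2 x • h x := fun x => rfl
  -- the contraction
  let T : BoundedContinuousFunction ℝ ℂ × BoundedContinuousFunction ℝ ℂ →
      BoundedContinuousFunction ℝ ℂ × BoundedContinuousFunction ℝ ℂ :=
    fun p => (Gb - AD p.2, Hb - AC p.1)
  have hKnn : (0:ℝ) ≤ m * (CD + CC) := by positivity
  have hADle : ∀ v : BoundedContinuousFunction ℝ ℂ, ‖AD v‖ ≤ m * CD * ‖v‖ := by
    intro v
    exact (BoundedContinuousFunction.norm_le (by positivity)).mpr (fun x => hADnorm v x)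
  have hACle : ∀ u : BoundedContinuousFunction ℝ ℂ, ‖AC u‖ ≤ m * CC * ‖u‖ := by
    intro u
    exact (BoundedContinuousFunction.norm_le (by positivity)).mpr (fun x => hACnorm u x)
  have hTlipd : ∀ p q, dist (T p) (T q) ≤ (m * (CD + CC)) * dist p q := by
    intro p q
    have hd1 : dist (Gb - AD p.2) (Gb - AD q.2) ≤ (m * (CD + CC)) * dist p q := by
      rw [dist_sub_left, dist_eq_norm,
        show AD p.2 - AD q.2 = AD (p.2 - q.2) from
          BoundedContinuousFunction.ext fun x => hADsub p.2 q.2 x]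
      calc ‖AD (p.2 - q.2)‖ ≤ m * CD * ‖p.2 - q.2‖ := hADle _
        _ = m * CD * dist p.2 q.2 := by rw [dist_eq_norm]
        _ ≤ (m * (CD + CC)) * dist p q := by
            have h1 : dist p.2 q.2 ≤ dist p q := by
              rw [Prod.dist_eq]; exact le_max_right _ _
            have h2 : m * CD ≤ m * (CD + CC) := by nlinarith
            exact mul_le_mul h2 h1 dist_nonneg hKnn
    have hd2 : dist (Hb - AC p.1) (Hb - AC q.1) ≤ (m * (CD + CC)) * dist p q := by
      rw [dist_sub_left, dist_eq_norm,
        show AC p.1 - AC q.1 = AC (p.1 - q.1) from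
          BoundedContinuousFunction.ext fun x => hACsub p.1 q.1 x]
      calc ‖AC (p.1 - q.1)‖ ≤ m * CC * ‖p.1 - q.1‖ := hACle _
        _ = m * CC * dist p.1 q.1 := by rw [dist_eq_norm]
        _ ≤ (m * (CD + CC)) * dist p q := by
            have h1 : dist p.1 q.1 ≤ dist p q := by
              rw [Prod.dist_eq]; exact le_max_left _ _
            have h2 : m * CC ≤ m * (CD + CC) := by nlinarith
            exact mul_le_mul h2 h1 dist_nonneg hKnn
    calc dist (T p) (T q)
        = max (dist (Gb - AD p.2) (Gb - AD q.2)) (dist (Hb - AC p.1) (Hb - AC q.1)) :=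
          Prod.dist_eq
      _ ≤ (m * (CD + CC)) * dist p q := max_le hd1 hd2
  have hcontr : ContractingWith ⟨m * (CD + CC), hKnn⟩ T := by
    constructor
    · refine NNReal.coe_lt_coe.mp ?_; rw [NNReal.coe_one]
      calc (m * (CD + CC) : ℝ) = (CD + CC) * m := by ring
        _ < 1 := hMm
    · exact LipschitzWith.of_dist_le_mul hTlipd
  let pstar := ContractingWith.fixedPoint T hcontr
  have hpfix : T pstar = pstar := hcontr.fixedPoint_isFixedPt
  -- the solution
  have hsol1 : ∀ x, pstar.1 x = w1 x • g x - w1 x • ∫ y : ℝ, kD x y * ((w2 y)⁻¹ • pstar.2 y) := by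
    intro x
    conv_lhs => rw [← hpfix]
    rfl
  have hsol2 : ∀ x, pstar.2 x = w2 x • h x - w2 x • ∫ y : ℝ, kC x y * ((w1 y)⁻¹ • pstar.1 y) := by
    intro x
    conv_lhs => rw [← hpfix]
    rfl
  refine ⟨((fun x => (w1 x)⁻¹ • pstar.1 x), (fun x => (w2 x)⁻¹ • pstar.2 x)),
    ⟨⟨?_, ?_⟩, ⟨?_, ?_⟩, ?_, ?_⟩, ?_⟩
  · exact (hw1cont.inv₀ (fun x => (hw1pos x).ne')).smul pstar.1.continuous
  · refine ⟨‖pstar.1‖, fun z hz => ?_⟩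
    obtain ⟨x, rfl⟩ := hz
    simp only
    rw [norm_smul, Real.norm_eq_abs, abs_of_pos (inv_pos.mpr (hw1pos x)), ← mul_assoc,
      mul_inv_cancel₀ (hw1pos x).ne', one_mul]
    exact pstar.1.norm_coe_le_norm x
  · exact (hw2cont.inv₀ (fun x => (hw2pos x).ne')).smul pstar.2.continuous
  · refine ⟨‖pstar.2‖, fun z hz => ?_⟩
    obtain ⟨x, rfl⟩ := hz
    simp only
    rw [norm_smul, Real.norm_eq_abs, abs_of_pos (inv_pos.mpr (hw2pos x)), ← mul_assoc,
      mul_inv_cancel₀ (hw2pos x).ne', one_mul]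
    exact pstar.2.norm_coe_le_norm x
  · intro x
    show (w1 x)⁻¹ • pstar.1 x + (∫ y : ℝ, kD x y * ((w2 y)⁻¹ • pstar.2 y)) = g x
    rw [hsol1 x, smul_sub, inv_smul_smul₀ (hw1pos x).ne', inv_smul_smul₀ (hw1pos x).ne',
      sub_add_cancel]
  · intro x
    show (∫ y : ℝ, kC x y * ((w1 y)⁻¹ • pstar.1 y)) + (w2 x)⁻¹ • pstar.2 x = h x
    rw [hsol2 x, smul_sub, inv_smul_smul₀ (hw2pos x).ne', inv_smul_smul₀ (hw2pos x).ne',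
      add_sub_cancel]
  · rintro ⟨q1, q2⟩ ⟨⟨hq1c, hq1b⟩, ⟨hq2c, hq2b⟩, he1, he2⟩
    obtain ⟨N1, hN1⟩ := hq1b
    obtain ⟨N2, hN2⟩ := hq2b
    have hq1n : ∀ x, ‖w1 x • q1 x‖ ≤ N1 := by
      intro x
      rw [norm_smul, Real.norm_eq_abs, abs_of_pos (hw1pos x)]
      exact hN1 (Set.mem_range_self x)
    have hq2n : ∀ x, ‖w2 x • q2 x‖ ≤ N2 := by
      intro x
      rw [norm_smul, Real.norm_eq_abs, abs_of_pos (hw2pos x)]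
      exact hN2 (Set.mem_range_self x)
    let u : BoundedContinuousFunction ℝ ℂ :=
      BoundedContinuousFunction.ofNormedAddCommGroup _ (hw1cont.smul hq1c) N1 hq1n
    let v : BoundedContinuousFunction ℝ ℂ :=
      BoundedContinuousFunction.ofNormedAddCommGroup _ (hw2cont.smul hq2c) N2 hq2n
    have huapp : ∀ x, u x = w1 x • q1 x := fun x => rfl
    have hvapp : ∀ x, v x = w2 x • q2 x := fun x => rfl
    have hres1 : ∀ y, (w1 y)⁻¹ • u y = q1 y := fun y => by
      rw [huapp, inv_smul_smul₀ (hw1pos y).ne']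
    have hres2 : ∀ y, (w2 y)⁻¹ • v y = q2 y := fun y => by
      rw [hvapp, inv_smul_smul₀ (hw2pos y).ne']
    have hfix' : T (u, v) = (u, v) := by
      have hc1 : Gb - AD v = u := by
        ext x
        show w1 x • g x - w1 x • (∫ y : ℝ, kD x y * ((w2 y)⁻¹ • v y)) = w1 x • q1 x
        have : (∫ y : ℝ, kD x y * ((w2 y)⁻¹ • v y)) = ∫ y : ℝ, kD x y * q2 y := by
          apply integral_congr_ae
          apply ae_of_all
          intro y
          simp only [hres2]
        rw [this, ← smul_sub]
        congr 1
        have := he1 x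
        rw [← this]
        ring
      have hc2 : Hb - AC u = v := by
        ext x
        show w2 x • h x - w2 x • (∫ y : ℝ, kC x y * ((w1 y)⁻¹ • u y)) = w2 x • q2 x
        have : (∫ y : ℝ, kC x y * ((w1 y)⁻¹ • u y)) = ∫ y : ℝ, kC x y * q1 y := by
          apply integral_congr_ae
          apply ae_of_all
          intro y
          simp only [hres1]
        rw [this, ← smul_sub]
        congr 1
        have := he2 x
        rw [← this]
        ring
      exact Prod.ext hc1 hc2
    have huv : (u, v) = pstar := hcontr.fixedPoint_unique hfix'
    have hu1 : u = pstar.1 := by rw [← huv]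
    have hv2 : v = pstar.2 := by rw [← huv]
    refine Prod.ext ?_ ?_
    · funext x
      show q1 x = (w1 x)⁻¹ • pstar.1 x
      rw [← hu1, huapp, inv_smul_smul₀ (hw1pos x).ne']
    · funext x
      show q2 x = (w2 x)⁻¹ • pstar.2 x
      rw [← hv2, hvapp, inv_smul_smul₀ (hw2pos x).ne']
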